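/- In the Arimoto iteration for a product source, if the initial reproduction distribution factorizes as q^{(0)}_𝒦 = ∏ᵢ q^{(0)}_{kᵢ}, the source distribution factorizes as p_𝒥 = ∏ᵢ p_{jᵢ}, and the distortion is additive δ_{𝒥𝒦} = Σᵢ δ_{jᵢkᵢ}, then after one Arimoto update step the quantities w^{(1)}_{𝒦|𝒥} and q^{(1)}_𝒦 also factorize: w^{(1)}_{𝒦|𝒥} = ∏ᵢ w^{(1)}_{kᵢ|jᵢ} and q^{(1)}_𝒦 = ∏ᵢ q^{(1)}_{kᵢ}, where the per-component factors are given by the single-component Arimoto updates. -/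

import Mathlib

open Real Finset

/-- One-step Arimoto update for the conditional distribution `w_{k|j}`. -/
noncomputable def arimotoW {X Y : Type*} [Fintype Y]
    (q : Y → ℝ) (δ : X → Y → ℝ) (t : ℝ) (j : X) (k : Y) : ℝ :=
  q k * (2:ℝ) ^ (t * δ j k) / ∑ k', q k' * (2:ℝ) ^ (t * δ j k')

/-- One-step Arimoto update for the reproduction distribution `q_k`. -/
noncomputable def arimotoQ {X Y : Type*} [Fintype X] [Fintype Y]
    (p : X → ℝ) (q : Y → ℝ) (δ : X → Y → ℝ) (s t : ℝ) (k : Y) : ℝ :=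
  (∑ j, p j * (2:ℝ) ^ (-(s * t * δ j k)) * (arimotoW q δ t j k) ^ (1 + s)) ^ (1 / (1 + s)) /
    ∑ k', (∑ j, p j * (2:ℝ) ^ (-(s * t * δ j k')) * (arimotoW q δ t j k') ^ (1 + s)) ^ (1 / (1 + s))

theorem arimoto_update_factorizes {X Y : Type*} [Fintype X] [Fintype Y] (N : ℕ)
    (p : Fin N → X → ℝ) (q : Fin N → Y → ℝ) (δ : Fin N → X → Y → ℝ) (s t : ℝ)
    (hs : 0 ≤ s) (ht : t ≤ 0)
    (hp : ∀ i j, 0 < p i j) (hq : ∀ i k, 0 < q i k) :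
    (∀ (J : Fin N → X) (K : Fin N → Y),
      arimotoW (fun K' : Fin N → Y => ∏ i, q i (K' i)) (fun (J' : Fin N → X) (K' : Fin N → Y) => ∑ i, δ i (J' i) (K' i)) t J K
        = ∏ i, arimotoW (q i) (δ i) t (J i) (K i)) ∧
    (∀ K : Fin N → Y,
      arimotoQ (fun J' : Fin N → X => ∏ i, p i (J' i)) (fun K' : Fin N → Y => ∏ i, q i (K' i))
          (fun (J' : Fin N → X) (K' : Fin N → Y) => ∑ i, δ i (J' i) (K' i)) s t K
        = ∏ i, arimotoQ (p i) (q i) (δ i) s t (K i)) := by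
  have h2 : (0:ℝ) < 2 := by norm_num
  have hexp : 1 / (1 + s) ≠ 0 := by positivity
  -- product over components of q k * 2^(t δ) factorization
  have key : ∀ (J : Fin N → X) (K : Fin N → Y),
      (∏ i, q i (K i)) * (2:ℝ) ^ (t * ∑ i, δ i (J i) (K i))
        = ∏ i, q i (K i) * (2:ℝ) ^ (t * δ i (J i) (K i)) := by
    intro J K
    rw [Finset.mul_sum, Real.rpow_sum_of_pos h2, ← Finset.prod_mul_distrib]
  have hW : ∀ (J : Fin N → X) (K : Fin N → Y),
      arimotoW (fun K' : Fin N → Y => ∏ i, q i (K' i))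
        (fun (J' : Fin N → X) (K' : Fin N → Y) => ∑ i, δ i (J' i) (K' i)) t J K
        = ∏ i, arimotoW (q i) (δ i) t (J i) (K i) := by
    intro J K
    unfold arimotoW
    rw [Finset.prod_div_distrib, key J K]
    congr 1
    rw [Fintype.prod_sum fun i k => q i k * (2:ℝ) ^ (t * δ i (J i) k)]
    exact Finset.sum_congr rfl fun K' _ => key J K'
  refine ⟨hW, fun K => ?_⟩
  have hwpos : ∀ i j k, 0 < arimotoW (q i) (δ i) t j k := by
    intro i j k
    apply div_pos (mul_pos (hq i k) (Real.rpow_pos_of_pos h2 _))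
    exact Finset.sum_pos (fun k' _ => mul_pos (hq i k') (Real.rpow_pos_of_pos h2 _))
      ⟨k, Finset.mem_univ k⟩
  have keyQ : ∀ (K : Fin N → Y) (J : Fin N → X),
      (∏ i, p i (J i)) * (2:ℝ) ^ (-(s * t * ∑ i, δ i (J i) (K i)))
          * (∏ i, arimotoW (q i) (δ i) t (J i) (K i)) ^ (1 + s)
        = ∏ i, p i (J i) * (2:ℝ) ^ (-(s * t * δ i (J i) (K i)))
            * (arimotoW (q i) (δ i) t (J i) (K i)) ^ (1 + s) := by
    intro K J
    have : -(s * t * ∑ i, δ i (J i) (K i)) = ∑ i, -(s * t * δ i (J i) (K i)) := by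
      rw [Finset.mul_sum]
      exact (Finset.sum_neg_distrib _).symm
    rw [this, Real.rpow_sum_of_pos h2,
      ← Real.finset_prod_rpow _ _ (fun i _ => (hwpos i (J i) (K i)).le),
      ← Finset.prod_mul_distrib, ← Finset.prod_mul_distrib]
  have inner : ∀ K : Fin N → Y,
      (∑ J : Fin N → X, (∏ i, p i (J i)) * (2:ℝ) ^ (-(s * t * ∑ i, δ i (J i) (K i)))
          * (∏ i, arimotoW (q i) (δ i) t (J i) (K i)) ^ (1 + s))
        = ∏ i, ∑ j, p i j * (2:ℝ) ^ (-(s * t * δ i j (K i)))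
            * (arimotoW (q i) (δ i) t j (K i)) ^ (1 + s) := by
    intro K
    rw [Fintype.prod_sum fun i j => p i j * (2:ℝ) ^ (-(s * t * δ i j (K i)))
      * (arimotoW (q i) (δ i) t j (K i)) ^ (1 + s)]
    exact Finset.sum_congr rfl fun J _ => keyQ K J
  unfold arimotoQ
  simp only [hW, inner]
  rcases isEmpty_or_nonempty X with hX | hX
  · -- X is empty
    rcases Nat.eq_zero_or_pos N with hN | hN
    · subst hN
      simp
    · have hXN : IsEmpty (Fin N → X) := by
        have : Nonempty (Fin N) := ⟨⟨0, hN⟩⟩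
        exact Function.isEmpty (fun f => f (Classical.arbitrary (Fin N)))
      have hz : ∀ k : Y, (∑ j : X, p (⟨0, hN⟩) j) = 0 := by simp
      have h0 : ∀ i (k : Y), (∑ j, p i j * (2:ℝ) ^ (-(s * t * δ i j k))
          * (arimotoW (q i) (δ i) t j k) ^ (1 + s)) = 0 := by
        intro i k; exact Finset.sum_of_isEmpty _
      have hexp' : ((1:ℝ) + s)⁻¹ ≠ 0 := by positivity
      simp [h0, Real.zero_rpow hexp, Real.zero_rpow hexp', Finset.prod_const,
        zero_pow hN.ne']
  · -- X nonempty
    have hSpos : ∀ i (k : Y), 0 < ∑ j, p i j * (2:ℝ) ^ (-(s * t * δ i j k))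
        * (arimotoW (q i) (δ i) t j k) ^ (1 + s) := by
      intro i k
      refine Finset.sum_pos (fun j _ => ?_) Finset.univ_nonempty
      exact mul_pos (mul_pos (hp i j) (Real.rpow_pos_of_pos h2 _))
        (Real.rpow_pos_of_pos (hwpos i j k) _)
    rw [Finset.prod_div_distrib,
      ← Real.finset_prod_rpow _ _ (fun i _ => (hSpos i (K i)).le)]
    congr 1
    rw [Fintype.prod_sum fun i k => (∑ j, p i j * (2:ℝ) ^ (-(s * t * δ i j k))
      * (arimotoW (q i) (δ i) t j k) ^ (1 + s)) ^ (1 / (1 + s))]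
    exact Finset.sum_congr rfl fun K' _ =>
      (Real.finset_prod_rpow _ _ (fun i _ => (hSpos i (K' i)).le) _).symm
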